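/- Let n be a positive integer, S a join-semilattice with zero, and δ : X × X → S a V-distance of type n. Then any two equivalence relations in the range of the associated map φ : S → Eq(X), φ(a) = {(x,y) | δ(x,y) ≤ a}, are (n+1)-permutable. -/
import Mathlib


/-- An `S`-valued distance on `X`. -/
def IsSDistance {X : Type*} {S : Type*} [SemilatticeSup S] [OrderBot S]
    (δ : X → X → S) : Prop :=
  (∀ x, δ x x = ⊥) ∧ (∀ x y, δ x y = δ y x) ∧
    (∀ x y z, δ x z ≤ δ x y ⊔ δ y z)

/-- The V-condition of type `n`. -/
def VConditionType {X : Type*} {S : Type*} [SemilatticeSup S] [OrderBot S]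
    (n : ℕ) (δ : X → X → S) : Prop :=
  ∀ x y : X, ∀ a b : S, δ x y ≤ a ⊔ b →
    ∃ z : ℕ → X, z 0 = x ∧ z (n + 1) = y ∧
      ∀ i ≤ n, (Even i → δ (z i) (z (i + 1)) ≤ a) ∧
        (Odd i → δ (z i) (z (i + 1)) ≤ b)

/-- The composition `γ_0 ∘ γ_1 ∘ ⋯ ∘ γ_k` of relations:
`relChainComp γ k x y` holds iff there is a chain from `x` to `y` whose `i`-th
step lies in `γ i`, for `i = 0, …, k`. -/
def relChainComp {X : Type*} (γ : ℕ → X → X → Prop) : ℕ → X → X → Prop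
  | 0 => γ 0
  | k + 1 => fun x y => ∃ z, relChainComp γ k x z ∧ γ (k + 1) z y

/-- The alternating sequence of relations: `α` at even places, `β` at odd ones. -/
def altRel {X : Type*} (α β : X → X → Prop) (k : ℕ) : X → X → Prop :=
  if Even k then α else β

lemma chain_le_aux {X : Type*} {S : Type*} [SemilatticeSup S] [OrderBot S]
    (δ : X → X → S) (hδ : IsSDistance δ) (γ : ℕ → X → X → Prop) (c : S)
    (hγ : ∀ i u v, γ i u v → δ u v ≤ c) :
    ∀ k x y, relChainComp γ k x y → δ x y ≤ c := by
  intro k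
  induction k with
  | zero => intro x y h; exact hγ 0 x y h
  | succ k ih =>
    rintro x y ⟨z, h1, h2⟩
    exact le_trans (hδ.2.2 x z y) (sup_le (ih x z h1) (hγ _ _ _ h2))

lemma chain_of_fun_aux {X : Type*} (γ : ℕ → X → X → Prop) :
    ∀ k (z : ℕ → X), (∀ i ≤ k, γ i (z i) (z (i + 1))) →
      relChainComp γ k (z 0) (z (k + 1)) := by
  intro k
  induction k with
  | zero => intro z h; exact h 0 le_rfl
  | succ k ih =>
    intro z h
    exact ⟨z (k + 1), ih z (fun i hi => h i (le_trans hi (Nat.le_succ k))),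
      h (k + 1) le_rfl⟩

/-- If `δ` is a V-distance of type `n` (`n` positive), then any two equivalence
relations `φ(a)`, `φ(b)` in the range of `φ` are `(n+1)`-permutable:
`γ_0γ_1⋯γ_n = γ_1γ_2⋯γ_{n+1}` where `γ_k = φ(a)` for even `k` and `φ(b)` for
odd `k`. -/
theorem phi_range_permutable {X : Type*} {S : Type*} [SemilatticeSup S] [OrderBot S]
    (n : ℕ) (hn : 0 < n) (δ : X → X → S) (hδ : IsSDistance δ)
    (hV : VConditionType n δ) (a b : S) :
    ∀ x y : X,
      relChainComp (altRel (fun u v : X => δ u v ≤ a) (fun u v : X => δ u v ≤ b)) n x y ↔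
      relChainComp (altRel (fun u v : X => δ u v ≤ b) (fun u v : X => δ u v ≤ a)) n x y := by
  have key : ∀ c d : S, ∀ x y : X,
      relChainComp (altRel (fun u v : X => δ u v ≤ c) (fun u v : X => δ u v ≤ d)) n x y →
      relChainComp (altRel (fun u v : X => δ u v ≤ d) (fun u v : X => δ u v ≤ c)) n x y := by
    intro c d x y h
    have hxy : δ x y ≤ c ⊔ d := by
      refine chain_le_aux δ hδ _ (c ⊔ d) ?_ n x y h
      intro i u v hi
      unfold altRel at hi
      by_cases he : Even i
      · simp [he] at hi; exact le_trans hi le_sup_left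
      · simp [he] at hi; exact le_trans hi le_sup_right
    obtain ⟨z, hz0, hzn, hsteps⟩ := hV x y d c (by rwa [sup_comm])
    have := chain_of_fun_aux
      (altRel (fun u v : X => δ u v ≤ d) (fun u v : X => δ u v ≤ c)) n z ?_
    · rwa [hz0, hzn] at this
    · intro i hi
      unfold altRel
      by_cases he : Even i
      · simp [he]; exact (hsteps i hi).1 he
      · simp [he]; exact (hsteps i hi).2 (Nat.not_even_iff_odd.mp he)
  intro x y
  exact ⟨key a b x y, key b a x y⟩
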